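/- arXiv:2410.18465 — 8 statements merged into one kernel-verified Lean document; each statement's English description precedes it below -/
import Mathlib

section
/- Let h : ℝⁿ → ℝ be continuously differentiable on a convex set C with ν-Hölder continuous gradient with constant M, ν ∈ (0,1). Then for every ε > 0 and all x, y ∈ C, h(y) ≤ h(x) + ⟨∇h(x), y − x⟩ + (L(ε)/2)‖y − x‖² + ε, where L(ε) = ((1−ν)/((1+ν)·2ε))^((1−ν)/(1+ν)) · M^(2/(1+ν)). -/
open scoped RealInnerProductSpace

lemma young_aux (ν M ε r : ℝ) (hν₀ : 0 < ν) (hν₁ : ν < 1) (hM : 0 < M)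
    (hε : 0 < ε) (hr : 0 ≤ r) :
    M / (1 + ν) * (r ^ ν * r) ≤
      (((1 - ν) / (1 + ν) * (1 / (2 * ε))) ^ ((1 - ν) / (1 + ν)) * M ^ (2 / (1 + ν)) / 2)
        * r ^ 2 + ε := by
  have h1ν : (0:ℝ) < 1 + ν := by linarith
  have h2ν : (0:ℝ) < 1 - ν := by linarith
  rcases eq_or_lt_of_le hr with h0 | h0
  · rw [← h0]
    have e : (0:ℝ) ^ ν * 0 = 0 := by ring
    rw [e, mul_zero]
    have : (0:ℝ) ≤ (((1 - ν) / (1 + ν) * (1 / (2 * ε))) ^ ((1 - ν) / (1 + ν))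
        * M ^ (2 / (1 + ν)) / 2) * (0:ℝ) ^ 2 := by positivity
    linarith
  set K := (1 - ν) / (1 + ν) * (1 / (2 * ε)) with hK
  have hKpos : 0 < K := by positivity
  set L := K ^ ((1 - ν) / (1 + ν)) * M ^ (2 / (1 + ν)) with hL
  have hLpos : 0 < L := by positivity
  have hp1 : 0 < L / (1 + ν) * r ^ 2 := by positivity
  have hp2 : 0 < 2 * ε / (1 - ν) := by positivity
  have amgm := Real.geom_mean_le_arith_mean2_weighted
    (w₁ := (1 + ν) / 2) (w₂ := (1 - ν) / 2)
    (p₁ := L / (1 + ν) * r ^ 2) (p₂ := 2 * ε / (1 - ν))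
    (by positivity) (by positivity) hp1.le hp2.le (by ring)
  have lK : Real.log K = Real.log (1 - ν) - Real.log (1 + ν) - Real.log (2 * ε) := by
    rw [hK, one_div, Real.log_mul (div_pos h2ν h1ν).ne' (by positivity : (0:ℝ) < (2*ε)⁻¹).ne',
      Real.log_div h2ν.ne' h1ν.ne', Real.log_inv]
    ring
  have lL : Real.log L = (1 - ν) / (1 + ν) * Real.log K + 2 / (1 + ν) * Real.log M := by
    rw [hL, Real.log_mul (Real.rpow_pos_of_pos hKpos _).ne' (Real.rpow_pos_of_pos hM _).ne',
      Real.log_rpow hKpos, Real.log_rpow hM]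
  have hident : (L / (1 + ν) * r ^ 2) ^ ((1 + ν) / 2) * (2 * ε / (1 - ν)) ^ ((1 - ν) / 2)
      = M / (1 + ν) * (r ^ ν * r) := by
    apply Real.log_injOn_pos (Set.mem_Ioi.2 (by positivity)) (Set.mem_Ioi.2 (by positivity))
    have e_lhs : Real.log ((L / (1 + ν) * r ^ 2) ^ ((1 + ν) / 2)
        * (2 * ε / (1 - ν)) ^ ((1 - ν) / 2))
        = (1 + ν) / 2 * (Real.log L - Real.log (1 + ν) + 2 * Real.log r)
          + (1 - ν) / 2 * (Real.log (2 * ε) - Real.log (1 - ν)) := by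
      rw [Real.log_mul (Real.rpow_pos_of_pos hp1 _).ne' (Real.rpow_pos_of_pos hp2 _).ne',
        Real.log_rpow hp1, Real.log_rpow hp2,
        Real.log_mul (div_pos hLpos h1ν).ne' (pow_pos h0 2).ne',
        Real.log_div hLpos.ne' h1ν.ne',
        Real.log_div (by positivity : (0:ℝ) < 2 * ε).ne' h2ν.ne', Real.log_pow]
      push_cast
      ring
    have e_rhs : Real.log (M / (1 + ν) * (r ^ ν * r))
        = Real.log M - Real.log (1 + ν) + ν * Real.log r + Real.log r := by
      rw [Real.log_mul (div_pos hM h1ν).ne' (by positivity : (0:ℝ) < r ^ ν * r).ne',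
        Real.log_div hM.ne' h1ν.ne',
        Real.log_mul (Real.rpow_pos_of_pos h0 ν).ne' h0.ne', Real.log_rpow h0]
      ring
    rw [e_lhs, e_rhs, lL, lK]
    field_simp
    ring
  rw [hident] at amgm
  have hrhs : (1 + ν) / 2 * (L / (1 + ν) * r ^ 2) + (1 - ν) / 2 * (2 * ε / (1 - ν))
      = L / 2 * r ^ 2 + ε := by
    field_simp
  rw [hrhs] at amgm
  calc M / (1 + ν) * (r ^ ν * r) ≤ L / 2 * r ^ 2 + ε := amgm
    _ = _ := by rw [hL]

theorem stmt1 {n : ℕ} (C : Set (EuclideanSpace ℝ (Fin n))) (hC : Convex ℝ C)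
    (h : EuclideanSpace ℝ (Fin n) → ℝ)
    (h' : EuclideanSpace ℝ (Fin n) → EuclideanSpace ℝ (Fin n))
    (hsmooth : ContDiff ℝ 1 h)
    (hgrad : ∀ x, HasGradientAt h (h' x) x)
    (ν M : ℝ) (hν₀ : 0 < ν) (hν₁ : ν < 1) (hM : 0 < M)
    (hHolder : ∀ x ∈ C, ∀ y ∈ C, ‖h' x - h' y‖ ≤ M * ‖x - y‖ ^ ν) :
    ∀ ε : ℝ, 0 < ε → ∀ x ∈ C, ∀ y ∈ C,
      h y ≤ h x + ⟪h' x, y - x⟫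
        + (((1 - ν) / (1 + ν) * (1 / (2 * ε))) ^ ((1 - ν) / (1 + ν)) * M ^ (2 / (1 + ν)) / 2)
            * ‖y - x‖ ^ 2 + ε := by
  intro ε hε x hx y hy
  set d := y - x with hd
  -- continuity of h'
  have hcont : Continuous h' := by
    have h1 : Continuous (fderiv ℝ h) := hsmooth.continuous_fderiv one_ne_zero
    have h2 : Continuous fun z => (InnerProductSpace.toDual ℝ
        (EuclideanSpace ℝ (Fin n))).symm (fderiv ℝ h z) :=
      (InnerProductSpace.toDual ℝ (EuclideanSpace ℝ (Fin n))).symm.continuous.comp h1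
    have h3 : ∀ z, h' z = (InnerProductSpace.toDual ℝ
        (EuclideanSpace ℝ (Fin n))).symm (fderiv ℝ h z) := by
      intro z
      rw [((hgrad z).hasFDerivAt).fderiv]
      simp
    simpa [← funext h3] using h2
  -- derivative along the segment
  have hderiv : ∀ t : ℝ, HasDerivAt (fun t : ℝ => h (x + t • d)) ⟪h' (x + t • d), d⟫ t := by
    intro t
    have h1 : HasFDerivAt h (InnerProductSpace.toDual ℝ _ (h' (x + t • d))) (x + t • d) :=
      (hgrad _).hasFDerivAt
    have h2 : HasDerivAt (fun t : ℝ => x + t • d) d t := by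
      simpa using ((hasDerivAt_id t).smul_const d).const_add x
    have := h1.comp_hasDerivAt t h2
    simp at this
    exact this
  -- integrability
  have hcont2 : Continuous fun t : ℝ => ⟪h' (x + t • d), d⟫ := by
    apply Continuous.inner
    · exact hcont.comp (continuous_const.add (continuous_id.smul continuous_const))
    · exact continuous_const
  have hint1 : IntervalIntegrable (fun t : ℝ => ⟪h' (x + t • d), d⟫)
      MeasureTheory.volume 0 1 := hcont2.intervalIntegrable 0 1
  -- FTC
  have hftc : ∫ t in (0:ℝ)..1, ⟪h' (x + t • d), d⟫ = h y - h x := by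
    rw [intervalIntegral.integral_eq_sub_of_hasDerivAt (fun t _ => hderiv t) hint1]
    simp [hd]
  -- segment membership
  have hmem : ∀ t ∈ Set.Icc (0:ℝ) 1, x + t • d ∈ C := by
    intro t ht
    have := hC hx hy (by linarith [ht.2] : (0:ℝ) ≤ 1 - t) ht.1 (by ring)
    convert this using 1
    rw [hd]
    module
  -- pointwise bound
  have hbound : ∀ t ∈ Set.Icc (0:ℝ) 1,
      ⟪h' (x + t • d), d⟫ - ⟪h' x, d⟫ ≤ M * t ^ ν * (‖d‖ ^ ν * ‖d‖) := by
    intro t ht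
    have e1 : ⟪h' (x + t • d), d⟫ - ⟪h' x, d⟫ = ⟪h' (x + t • d) - h' x, d⟫ := by
      rw [inner_sub_left]
    rw [e1]
    calc ⟪h' (x + t • d) - h' x, d⟫ ≤ ‖h' (x + t • d) - h' x‖ * ‖d‖ :=
          real_inner_le_norm _ _
      _ ≤ (M * ‖(x + t • d) - x‖ ^ ν) * ‖d‖ := by
          apply mul_le_mul_of_nonneg_right _ (norm_nonneg d)
          exact hHolder _ (hmem t ht) x hx
      _ = M * t ^ ν * (‖d‖ ^ ν * ‖d‖) := by
          have e2 : (x + t • d) - x = t • d := by abel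
          rw [e2, norm_smul, Real.norm_eq_abs, abs_of_nonneg ht.1,
            Real.mul_rpow ht.1 (norm_nonneg d)]
          ring
  -- integral bound
  have hint2 : IntervalIntegrable (fun t : ℝ => M * t ^ ν * (‖d‖ ^ ν * ‖d‖))
      MeasureTheory.volume 0 1 := by
    apply IntervalIntegrable.mul_const
    exact (intervalIntegral.intervalIntegrable_rpow (Or.inl hν₀.le)).const_mul M
  have hmono : ∫ t in (0:ℝ)..1, (⟪h' (x + t • d), d⟫ - ⟪h' x, d⟫)
      ≤ ∫ t in (0:ℝ)..1, M * t ^ ν * (‖d‖ ^ ν * ‖d‖) := by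
    apply intervalIntegral.integral_mono_on zero_le_one
      (hint1.sub (intervalIntegrable_const)) hint2
    exact hbound
  have hleft : ∫ t in (0:ℝ)..1, (⟪h' (x + t • d), d⟫ - ⟪h' x, d⟫)
      = (h y - h x) - ⟪h' x, d⟫ := by
    rw [intervalIntegral.integral_sub hint1 intervalIntegrable_const, hftc]
    simp
  have hright : ∫ t in (0:ℝ)..1, M * t ^ ν * (‖d‖ ^ ν * ‖d‖)
      = M / (ν + 1) * (‖d‖ ^ ν * ‖d‖) := by
    have e : ∫ t in (0:ℝ)..1, M * t ^ ν * (‖d‖ ^ ν * ‖d‖)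
        = ∫ t in (0:ℝ)..1, t ^ ν * (M * (‖d‖ ^ ν * ‖d‖)) := by
      apply intervalIntegral.integral_congr
      intro t _
      ring
    rw [e, intervalIntegral.integral_mul_const, integral_rpow (Or.inl (by linarith : (-1:ℝ) < ν))]
    rw [Real.one_rpow, Real.zero_rpow (by positivity : ν + 1 ≠ 0)]
    ring
  have descent : h y ≤ h x + ⟪h' x, d⟫ + M / (1 + ν) * (‖d‖ ^ ν * ‖d‖) := by
    rw [hleft, hright] at hmono
    have : M / (ν + 1) = M / (1 + ν) := by ring_nf
    linarith [hmono, this ▸ hmono]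
  have young := young_aux ν M ε ‖d‖ hν₀ hν₁ hM hε (norm_nonneg d)
  linarith
end

section
/- Let ν ∈ (0,1], M > 0, θ < 0 and r > 0, and set t* = min{1, (|θ|/(M r^(1+ν)))^(1/ν)}. Then t*·θ + (M/(1+ν))·(t*)^(1+ν)·r^(1+ν) ≤ −(ν/(1+ν))·|θ|·min{1, (|θ|/(M r^(1+ν)))^(1/ν)}. -/
theorem stmt3 (ν M θ r : ℝ) (hν₀ : 0 < ν) (hν₁ : ν ≤ 1) (hM : 0 < M)
    (hθ : θ < 0) (hr : 0 < r) :
    (min 1 ((|θ| / (M * r ^ (1 + ν))) ^ (1 / ν))) * θ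
        + (M / (1 + ν)) * (min 1 ((|θ| / (M * r ^ (1 + ν))) ^ (1 / ν))) ^ (1 + ν) * r ^ (1 + ν)
      ≤ -(ν / (1 + ν)) * |θ| * min 1 ((|θ| / (M * r ^ (1 + ν))) ^ (1 / ν)) := by
  have hrp : (0:ℝ) < r ^ (1 + ν) := Real.rpow_pos_of_pos hr _
  have hθ' : 0 < |θ| := abs_pos.mpr hθ.ne
  have hA : 0 < |θ| / (M * r ^ (1 + ν)) := div_pos hθ' (mul_pos hM hrp)
  set A := |θ| / (M * r ^ (1 + ν)) with hAdef
  set t := min 1 (A ^ (1 / ν)) with htdef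
  have ht : 0 < t := lt_min one_pos (Real.rpow_pos_of_pos hA _)
  have h1 : t ^ ν ≤ A := by
    calc t ^ ν ≤ (A ^ (1 / ν)) ^ ν :=
          Real.rpow_le_rpow ht.le (min_le_right _ _) hν₀.le
      _ = A := by
          rw [← Real.rpow_mul hA.le, one_div, inv_mul_cancel₀ hν₀.ne', Real.rpow_one]
  have h2 : M * t ^ ν * r ^ (1 + ν) ≤ |θ| := by
    have := (le_div_iff₀ (mul_pos hM hrp)).mp h1
    nlinarith [this]
  have h3 : t ^ (1 + ν) = t * t ^ ν := by
    rw [Real.rpow_add ht, Real.rpow_one]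
  have habs : |θ| = -θ := abs_of_neg hθ
  have h4 : t * (M * t ^ ν * r ^ (1 + ν)) ≤ t * |θ| :=
    mul_le_mul_of_nonneg_left h2 ht.le
  have h1ν : (0:ℝ) < 1 + ν := by linarith
  rw [h3]
  have goal' : (1 + ν) * (t * θ + M / (1 + ν) * (t * t ^ ν) * r ^ (1 + ν)) ≤
      (1 + ν) * (-(ν / (1 + ν)) * |θ| * t) := by
    have lhs : (1 + ν) * (t * θ + M / (1 + ν) * (t * t ^ ν) * r ^ (1 + ν)) =
        (1 + ν) * t * θ + M * (t * t ^ ν) * r ^ (1 + ν) := by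
      field_simp
    have rhs : (1 + ν) * (-(ν / (1 + ν)) * |θ| * t) = -ν * |θ| * t := by
      field_simp
    rw [lhs, rhs]
    have h5 : ν * |θ| * t + ν * (t * θ) = 0 := by rw [habs]; ring
    have h6 : t * |θ| + t * θ = 0 := by rw [habs]; ring
    nlinarith [h4, h5, h6]
  exact le_of_mul_le_mul_left goal' h1ν
end

section
/- Let (γ_k) and (β_k) be sequences of non-negative reals with γ_{k+1} ≤ γ_k − c β_k min{1, β_k^α / A} for all k ≥ 0, where c ∈ (0,1), α > 0, A > 0, and β_k ≥ γ_k for all k. Set k₀ = ⌈(1/c)(log(γ₀/(c A^{1/α})))₊⌉. Then for all k ≥ k₀, γ_k ≤ (γ_{k₀}^{−α} + A^{−1} c α (k − k₀))^{−1/α}. -/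
lemma bern_aux {α t : ℝ} (hα : 0 < α) (ht0 : 0 ≤ t) (ht1 : t < 1) :
    1 + α * t ≤ (1 - t) ^ (-α) := by
  have h1 : (0:ℝ) < 1 - t := by linarith
  have h2 : (0:ℝ) < 1 + α * t := by nlinarith
  have hp : (0:ℝ) < (1 - t) ^ α := Real.rpow_pos_of_pos h1 α
  have key : (1 + α * t) * (1 - t) ^ α ≤ 1 := by
    have e1 : (1 - t) ^ α = Real.exp (Real.log (1 - t) * α) := Real.rpow_def_of_pos h1 α
    have e2 : (1 + α * t) = Real.exp (Real.log (1 + α * t)) := (Real.exp_log h2).symm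
    rw [e1, e2, ← Real.exp_add]
    have l1 : Real.log (1 + α * t) ≤ α * t := by
      have := Real.log_le_sub_one_of_pos h2; linarith
    have l2 : Real.log (1 - t) ≤ -t := by
      have := Real.log_le_sub_one_of_pos h1; linarith
    have l3 : Real.log (1 - t) * α ≤ -t * α :=
      mul_le_mul_of_nonneg_right l2 hα.le
    calc Real.exp (Real.log (1 + α * t) + Real.log (1 - t) * α)
        ≤ Real.exp 0 := Real.exp_le_exp.mpr (by linarith)
      _ = 1 := Real.exp_zero
  have : 1 + α * t ≤ 1 / ((1 - t) ^ α) := (le_div_iff₀ hp).mpr key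
  rwa [Real.rpow_neg h1.le, ← one_div]

theorem stmt4 (γ β : ℕ → ℝ) (hγ : ∀ k, 0 ≤ γ k) (hβ : ∀ k, 0 ≤ β k)
    (c α A : ℝ) (hc₀ : 0 < c) (hc₁ : c < 1) (hα : 0 < α) (hA : 0 < A)
    (hrec : ∀ k, γ (k + 1) ≤ γ k - c * β k * min 1 (β k ^ α / A))
    (hβγ : ∀ k, γ k ≤ β k)
    (k₀ : ℕ) (hk₀ : k₀ = ⌈(1 / c) * max (Real.log (γ 0 / (c * A ^ (1 / α)))) 0⌉₊) :
    ∀ k, k₀ ≤ k →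
      γ k ≤ (1 / (γ k₀ ^ (-α) + A⁻¹ * c * α * ((k : ℝ) - (k₀ : ℝ)))) ^ (1 / α) := by
  set B := A ^ (1/α) with hBdef
  have hB0 : 0 < B := Real.rpow_pos_of_pos hA _
  have hBA : B ^ α = A := by
    rw [hBdef, ← Real.rpow_mul hA.le, one_div_mul_cancel hα.ne', Real.rpow_one]
  have hmin0 : ∀ j, 0 ≤ c * β j * min 1 (β j ^ α / A) := fun j =>
    mul_nonneg (mul_nonneg hc₀.le (hβ j))
      (le_min one_pos.le (div_nonneg (Real.rpow_nonneg (hβ j) α) hA.le))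
  have hmono : ∀ j, γ (j+1) ≤ γ j := fun j => (hrec j).trans (by linarith [hmin0 j])
  have hmono' : ∀ i j : ℕ, i ≤ j → γ j ≤ γ i := by
    intro i j h
    induction j, h using Nat.le_induction with
    | base => exact le_rfl
    | succ n hn ih => exact (hmono n).trans ih
  -- γ k₀ ≤ B
  have hk0B : γ k₀ ≤ B := by
    by_cases hsmall : γ 0 ≤ c * B
    · exact (hmono' 0 k₀ (Nat.zero_le _)).trans (hsmall.trans (by nlinarith))
    · push_neg at hsmall
      by_cases hbig : ∀ j < k₀, A < β j ^ α
      · have hgeo : ∀ m, m ≤ k₀ → γ m ≤ (1 - c)^m * γ 0 := by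
          intro m hm
          induction m with
          | zero => simp
          | succ n ih =>
            have hn : n < k₀ := hm
            have hmin : min 1 (β n ^ α / A) = 1 :=
              min_eq_left (by rw [le_div_iff₀ hA]; nlinarith [hbig n hn])
            have h1 : γ (n+1) ≤ γ n - c * γ n := by
              have h := hrec n
              rw [hmin, mul_one] at h
              nlinarith [hβγ n]
            have h2 : γ n ≤ (1-c)^n * γ 0 := ih (le_of_lt hn)
            calc γ (n+1) ≤ (1-c) * γ n := by linarith
              _ ≤ (1-c) * ((1-c)^n * γ 0) :=
                  mul_le_mul_of_nonneg_left h2 (by linarith)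
              _ = (1-c)^(n+1) * γ 0 := by ring
        have hcB : 0 < c * B := by positivity
        have hγ0 : 0 < γ 0 := lt_trans hcB hsmall
        have hlog : Real.log (γ 0 / (c*B)) ≤ c * k₀ := by
          have h1 : ((1/c) * max (Real.log (γ 0 / (c * B))) 0 : ℝ) ≤ k₀ := by
            rw [hk₀]; exact Nat.le_ceil _
          have h2 : Real.log (γ 0/(c*B)) ≤ max (Real.log (γ 0 / (c * B))) 0 :=
            le_max_left _ _
          have h3 : c * ((1/c) * max (Real.log (γ 0 / (c * B))) 0) ≤ c * k₀ :=
            mul_le_mul_of_nonneg_left h1 hc₀.le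
          rw [show c * ((1/c) * max (Real.log (γ 0 / (c * B))) 0)
              = max (Real.log (γ 0 / (c * B))) 0 by field_simp] at h3
          linarith
        have hexp : ((1-c):ℝ)^k₀ ≤ Real.exp (-(c*k₀)) := by
          have h1 : (1:ℝ) - c ≤ Real.exp (-c) := by
            have := Real.add_one_le_exp (-c); linarith
          calc ((1-c):ℝ)^k₀ ≤ (Real.exp (-c))^k₀ :=
              pow_le_pow_left₀ (by linarith) h1 k₀
            _ = Real.exp (-(c*k₀)) := by
              rw [← Real.exp_nat_mul]; ring_nf
        have hratio : Real.exp (-(c*k₀)) ≤ c * B / γ 0 := by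
          rw [← Real.exp_log (show (0:ℝ) < c*B/γ 0 by positivity)]
          apply Real.exp_le_exp.mpr
          rw [Real.log_div hcB.ne' hγ0.ne']
          rw [Real.log_div hγ0.ne' hcB.ne'] at hlog
          linarith
        have := hgeo k₀ le_rfl
        have hfin : (1-c)^k₀ * γ 0 ≤ c * B := by
          calc (1-c)^k₀ * γ 0 ≤ Real.exp (-(c*k₀)) * γ 0 :=
              mul_le_mul_of_nonneg_right hexp hγ0.le
            _ ≤ (c * B / γ 0) * γ 0 := mul_le_mul_of_nonneg_right hratio hγ0.le
            _ = c * B := by field_simp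
        nlinarith
      · push_neg at hbig
        obtain ⟨j, hj, hjA⟩ := hbig
        have hβB : β j ≤ B := by
          rw [← hBA] at hjA
          exact (Real.rpow_le_rpow_iff (hβ j) hB0.le hα).mp hjA
        exact (hmono' j k₀ hj.le).trans ((hβγ j).trans hβB)
  -- one-step contraction below B
  have hstep : ∀ j, γ j ≤ B → γ (j+1) ≤ γ j * (1 - c * γ j ^ α / A) := by
    intro j hjB
    have hga : γ j ^ α ≤ A := by
      rw [← hBA]; exact Real.rpow_le_rpow (hγ j) hjB hα.le
    have hgb : γ j ^ α ≤ β j ^ α := Real.rpow_le_rpow (hγ j) (hβγ j) hα.le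
    have hga0 : 0 ≤ γ j ^ α := Real.rpow_nonneg (hγ j) α
    have key : γ j * (γ j ^ α / A) ≤ β j * min 1 (β j ^ α / A) := by
      rcases le_total (β j ^ α) A with h | h
      · rw [min_eq_right ((div_le_one hA).mpr h)]
        have hmm : γ j * γ j ^ α ≤ β j * β j ^ α :=
          mul_le_mul (hβγ j) hgb hga0 (hβ j)
        rw [mul_div_assoc'] at *
        rw [mul_div_assoc']
        exact (div_le_div_iff_of_pos_right hA).mpr hmm
      · rw [min_eq_left ((one_le_div hA).mpr h)]
        have h1 : γ j ^ α / A ≤ 1 := (div_le_one hA).mpr hga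
        calc γ j * (γ j ^ α / A) ≤ γ j * 1 :=
            mul_le_mul_of_nonneg_left h1 (hγ j)
          _ = γ j := mul_one _
          _ ≤ β j := hβγ j
          _ = β j * 1 := (mul_one _).symm
    have h := hrec j
    have h2 := mul_le_mul_of_nonneg_left key hc₀.le
    rw [← mul_assoc, ← mul_assoc] at h2
    calc γ (j+1) ≤ γ j - c * β j * min 1 (β j ^ α / A) := h
      _ ≤ γ j - c * γ j * (γ j ^ α / A) := by linarith
      _ = γ j * (1 - c * γ j ^ α / A) := by ring
  -- main invariant
  have H : ∀ n : ℕ, γ (k₀ + n) = 0 ∨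
      γ k₀ ^ (-α) + c * α / A * n ≤ γ (k₀ + n) ^ (-α) := by
    intro n
    induction n with
    | zero => right; simp
    | succ n ih =>
      by_cases hz : γ (k₀ + (n+1)) = 0
      · left; exact hz
      · right
        have hpos' : 0 < γ (k₀ + n + 1) := by
          rw [← Nat.add_assoc] at hz
          exact lt_of_le_of_ne (hγ _) (Ne.symm hz)
        have hpos : 0 < γ (k₀ + n) := lt_of_lt_of_le hpos' (hmono _)
        have ihr : γ k₀ ^ (-α) + c*α/A*n ≤ γ (k₀+n) ^ (-α) := by
          rcases ih with h0 | h
          · exact absurd h0 hpos.ne'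
          · exact h
        set g := γ (k₀+n) with hg
        have hgB : g ≤ B := (hmono' k₀ (k₀+n) (Nat.le_add_right _ _)).trans hk0B
        have hga : g ^ α ≤ A := by
          rw [← hBA]; exact Real.rpow_le_rpow hpos.le hgB hα.le
        set t := c * g ^ α / A with ht
        have hga0 : 0 ≤ g ^ α := Real.rpow_nonneg hpos.le α
        have ht0 : 0 ≤ t := by rw [ht]; positivity
        have ht1 : t < 1 := by
          have h1 : g^α / A ≤ 1 := (div_le_one hA).mpr hga
          have : t ≤ c * 1 := by
            rw [ht, mul_div_assoc]
            exact mul_le_mul_of_nonneg_left h1 hc₀.le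
          linarith
        have hstep' : γ (k₀+n+1) ≤ g * (1 - t) := hstep (k₀+n) hgB
        have h1t : 0 < 1 - t := by linarith
        have hmul : (g * (1-t)) ^ (-α) ≤ γ (k₀+n+1) ^ (-α) :=
          Real.rpow_le_rpow_of_nonpos hpos' hstep' (neg_nonpos.mpr hα.le)
        have hsplit : (g*(1-t))^(-α) = g^(-α) * (1-t)^(-α) :=
          Real.mul_rpow hpos.le h1t.le
        have hbern : 1 + α * t ≤ (1-t)^(-α) := bern_aux hα ht0 ht1
        have hone : g ^ (-α) * g ^ α = 1 := by
          rw [← Real.rpow_add hpos]; simp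
        have hcancel : g ^ (-α) * (α * t) = c * α / A := by
          calc g^(-α) * (α * t) = (g^(-α) * g^α) * (c*α/A) := by rw [ht]; ring
            _ = c*α/A := by rw [hone, one_mul]
        have hchain : g^(-α) + c*α/A ≤ γ (k₀+n+1)^(-α) := by
          calc g^(-α) + c*α/A = g^(-α) * (1 + α*t) := by
                rw [mul_add, mul_one, hcancel]
            _ ≤ g^(-α) * (1-t)^(-α) :=
                mul_le_mul_of_nonneg_left hbern (Real.rpow_nonneg hpos.le _)
            _ = (g*(1-t))^(-α) := hsplit.symm
            _ ≤ _ := hmul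
        have heq : k₀ + (n+1) = k₀ + n + 1 := by omega
        rw [heq]
        push_cast
        linarith
  -- conclude
  intro k hk
  obtain ⟨n, rfl⟩ := Nat.exists_eq_add_of_le hk
  set D := γ k₀ ^ (-α) + A⁻¹ * c * α * (((k₀ + n : ℕ) : ℝ) - (k₀ : ℝ)) with hD
  have hD' : D = γ k₀ ^ (-α) + c*α/A * n := by rw [hD]; push_cast; ring
  have hk0nn : 0 ≤ γ k₀ ^ (-α) := Real.rpow_nonneg (hγ k₀) _
  have hD0 : 0 ≤ D := by rw [hD']; positivity
  by_cases hz : γ (k₀+n) = 0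
  · rw [hz]
    exact Real.rpow_nonneg (by positivity) _
  · have hpos : 0 < γ (k₀+n) := lt_of_le_of_ne (hγ _) (Ne.symm hz)
    have hk0pos : 0 < γ k₀ := lt_of_lt_of_le hpos (hmono' _ _ (Nat.le_add_right _ _))
    have hDpos : 0 < D := by
      rw [hD']
      have := Real.rpow_pos_of_pos hk0pos (-α)
      positivity
    have hDle : D ≤ γ (k₀+n) ^ (-α) := by
      rcases H n with h0 | h
      · exact absurd h0 hpos.ne'
      · rw [hD']; exact h
    have h2 : D ^ (1/α) ≤ (γ (k₀+n) ^ (-α)) ^ (1/α) :=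
      Real.rpow_le_rpow hD0 hDle (by positivity)
    have h3 : (γ (k₀+n) ^ (-α)) ^ (1/α) = (γ (k₀+n))⁻¹ := by
      rw [← Real.rpow_mul (hγ _), show -α * (1/α) = -1 by field_simp,
        Real.rpow_neg_one]
    rw [h3] at h2
    have hD1 : 0 < D ^ (1/α) := Real.rpow_pos_of_pos hDpos _
    rw [one_div, Real.inv_rpow hD0]
    calc γ (k₀+n) = ((γ (k₀+n))⁻¹)⁻¹ := (inv_inv _).symm
      _ ≤ (D ^ (1/α))⁻¹ := by
          apply inv_anti₀ hD1 h2
end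

section
/- Suppose each ∇h_i is ν-Hölder continuous on dom(G) with constant M_ν = max_i M_{i,ν}, each g_i is convex, and let s(x) minimize u ↦ max_i {g_i(u) − g_i(x) + ⟨∇h_i(x), u − x⟩} with optimal value θ(x). Then for every x ∈ dom(G) and t ∈ [0,1], componentwise F(x + t(s(x) − x)) ≤ F(x) + (t θ(x) + (M_ν/(1+ν)) t^{1+ν} ‖s(x) − x‖^{1+ν}) e, where e = (1,…,1). -/
open scoped RealInnerProductSpace

theorem stmt8 {n m : ℕ} (hm : 0 < m)
    (S : Set (EuclideanSpace ℝ (Fin n))) (hSconv : Convex ℝ S) (hScomp : IsCompact S)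
    (g h : Fin m → EuclideanSpace ℝ (Fin n) → ℝ)
    (h' : Fin m → EuclideanSpace ℝ (Fin n) → EuclideanSpace ℝ (Fin n))
    (hgconv : ∀ i, ConvexOn ℝ S (g i))
    (hgrad : ∀ i x, HasGradientAt (h i) (h' i x) x)
    (ν Mν : ℝ) (hν₀ : 0 < ν) (hν₁ : ν ≤ 1) (hM : 0 < Mν)
    (hHolder : ∀ i, ∀ x ∈ S, ∀ y ∈ S, ‖h' i x - h' i y‖ ≤ Mν * ‖x - y‖ ^ ν)
    (x : EuclideanSpace ℝ (Fin n)) (hx : x ∈ S)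
    (sx : EuclideanSpace ℝ (Fin n)) (hsx : sx ∈ S) (θx : ℝ)
    (hθval : θx = ⨆ i : Fin m, (g i sx - g i x + ⟪h' i x, sx - x⟫))
    (hθopt : ∀ u ∈ S, θx ≤ ⨆ i : Fin m, (g i u - g i x + ⟪h' i x, u - x⟫))
    (t : ℝ) (ht : t ∈ Set.Icc (0 : ℝ) 1) :
    ∀ i, g i (x + t • (sx - x)) + h i (x + t • (sx - x)) ≤
      g i x + h i x + (t * θx + Mν / (1 + ν) * t ^ (1 + ν) * ‖sx - x‖ ^ (1 + ν)) := by
  intro i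
  obtain ⟨ht0, ht1⟩ := ht
  have hne : Nonempty (Fin m) := ⟨⟨0, hm⟩⟩
  set v := sx - x with hv
  -- membership of segment points in S
  have hmem : ∀ s : ℝ, s ∈ Set.Icc (0:ℝ) 1 → x + s • v ∈ S := by
    intro s hs
    have := hSconv hx hsx (by linarith [hs.1, hs.2] : (0:ℝ) ≤ 1 - s) hs.1 (by ring)
    convert this using 1
    module
  -- derivative of φ s = h i (x + s • v)
  have hφderiv : ∀ s : ℝ, HasDerivAt (fun s : ℝ => h i (x + s • v))
      ⟪h' i (x + s • v), v⟫ s := by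
    intro s
    have hc : HasDerivAt (fun s : ℝ => x + s • v) v s := by
      simpa using ((hasDerivAt_id s).smul_const v).const_add x
    have := ((hgrad i (x + s • v)).hasFDerivAt).comp_hasDerivAt s hc
    simpa [InnerProductSpace.toDual_apply_apply, Function.comp_def] using this
  -- key descent inequality for h i
  have hν1pos : (0:ℝ) < 1 + ν := by linarith
  have key : h i (x + t • v) ≤ h i x + t * ⟪h' i x, v⟫
      + Mν / (1 + ν) * t ^ (1 + ν) * ‖v‖ ^ (1 + ν) := by
    set ψ : ℝ → ℝ := fun s => h i (x + s • v) - h i x - s * ⟪h' i x, v⟫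
      - Mν / (1 + ν) * s ^ (1 + ν) * ‖v‖ ^ (1 + ν) with hψ
    have hψ0 : ψ 0 = 0 := by
      simp [hψ, Real.zero_rpow hν1pos.ne']
    have hanti : AntitoneOn ψ (Set.Icc 0 1) := by
      apply antitoneOn_of_deriv_nonpos (convex_Icc 0 1)
      · -- continuity
        apply ContinuousOn.sub
        apply ContinuousOn.sub
        apply ContinuousOn.sub
        · exact fun s _ => ((hφderiv s).differentiableAt.continuousAt).continuousWithinAt
        · exact continuousOn_const
        · exact (continuous_id.mul continuous_const).continuousOn
        · exact ContinuousOn.mul (ContinuousOn.mul continuousOn_const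
            (fun s _ => (Real.continuousAt_rpow_const s (1+ν) (Or.inr hν1pos.le)).continuousWithinAt))
            continuousOn_const
      · -- differentiability on interior
        intro s hs
        rw [interior_Icc] at hs
        apply DifferentiableAt.differentiableWithinAt
        apply DifferentiableAt.sub
        apply DifferentiableAt.sub
        apply DifferentiableAt.sub
        · exact (hφderiv s).differentiableAt
        · exact differentiableAt_const _
        · exact differentiableAt_id.mul (differentiableAt_const _)
        · exact (((differentiableAt_const _).mul
            (Real.hasDerivAt_rpow_const (p := 1+ν) (Or.inl hs.1.ne')).differentiableAt).mul
            (differentiableAt_const _))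
      · -- deriv ≤ 0
        intro s hs
        rw [interior_Icc] at hs
        have hd : HasDerivAt ψ (⟪h' i (x + s • v), v⟫ - ⟪h' i x, v⟫
            - Mν / (1 + ν) * ((1+ν) * s ^ ((1+ν)-1)) * ‖v‖ ^ (1 + ν)) s := by
          exact (((hφderiv s).sub_const _).sub ((hasDerivAt_id s).mul_const _ |>.congr_deriv (by ring))).sub
            ((((Real.hasDerivAt_rpow_const (p := 1+ν) (Or.inl hs.1.ne')).const_mul
              (Mν / (1+ν))).mul_const _))
        rw [hd.deriv]
        have h1 : ⟪h' i (x + s • v), v⟫ - ⟪h' i x, v⟫ = ⟪h' i (x + s • v) - h' i x, v⟫ := by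
          rw [inner_sub_left]
        have h2 : ⟪h' i (x + s • v) - h' i x, v⟫ ≤ ‖h' i (x + s • v) - h' i x‖ * ‖v‖ :=
          real_inner_le_norm _ _
        have h3 : ‖h' i (x + s • v) - h' i x‖ ≤ Mν * ‖x + s • v - x‖ ^ ν :=
          hHolder i _ (hmem s ⟨hs.1.le, hs.2.le⟩) x hx
        have h4 : ‖x + s • v - x‖ = s * ‖v‖ := by
          rw [add_sub_cancel_left, norm_smul, Real.norm_eq_abs, abs_of_pos hs.1]
        have h5 : (s * ‖v‖) ^ ν = s ^ ν * ‖v‖ ^ ν :=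
          Real.mul_rpow hs.1.le (norm_nonneg _)
        have h6 : ‖v‖ ^ ν * ‖v‖ = ‖v‖ ^ (ν + 1) := by
          rw [Real.rpow_add' (norm_nonneg _) (by positivity), Real.rpow_one]
        have h7 : Mν / (1 + ν) * ((1+ν) * s ^ ((1+ν)-1)) * ‖v‖ ^ (1 + ν)
            = Mν * s ^ ν * ‖v‖ ^ (1 + ν) := by
          rw [show (1+ν)-1 = ν by ring]
          field_simp
        rw [h1, h7]
        have : ⟪h' i (x + s • v) - h' i x, v⟫ ≤ Mν * s ^ ν * ‖v‖ ^ (1 + ν) := by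
          calc ⟪h' i (x + s • v) - h' i x, v⟫ ≤ ‖h' i (x + s • v) - h' i x‖ * ‖v‖ := h2
            _ ≤ Mν * (s * ‖v‖) ^ ν * ‖v‖ := by
                rw [← h4]; exact mul_le_mul_of_nonneg_right (h3.trans (le_of_eq rfl)) (norm_nonneg _)
            _ = Mν * s ^ ν * ‖v‖ ^ (1 + ν) := by
                rw [h5, show (1:ℝ)+ν = ν+1 by ring, ← h6]; ring
        linarith
    have := hanti (Set.left_mem_Icc.2 zero_le_one) ⟨ht0, ht1⟩ ht0
    rw [hψ0] at this
    simp only [hψ] at this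
    linarith
  -- convexity inequality for g i
  have hgle : g i (x + t • v) ≤ g i x + t * (g i sx - g i x) := by
    have := (hgconv i).2 hx hsx (by linarith : (0:ℝ) ≤ 1 - t) ht0 (by ring)
    have heq : (1 - t) • x + t • sx = x + t • v := by module
    rw [heq] at this
    simp only [smul_eq_mul] at this
    linarith
  -- θx bound
  have hθle : g i sx - g i x + ⟪h' i x, v⟫ ≤ θx := by
    rw [hθval]
    exact le_ciSup (f := fun j : Fin m => g j sx - g j x + ⟪h' j x, sx - x⟫) (Set.Finite.bddAbove (Set.finite_range _)) i
  have := mul_le_mul_of_nonneg_left hθle ht0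
  linarith
end

section
/- In the parameter-dependent generalized conditional gradient method, with step size t_k = min{1, (|θ(x^k)|/(M_ν ‖s(x^k) − x^k‖^{1+ν}))^{1/ν}} and update x^{k+1} = x^k + t_k(s(x^k) − x^k), each component f_i satisfies f_i(x^{k+1}) − f_i(x^k) ≤ −(ν/(1+ν)) |θ(x^k)| min{1, (−θ(x^k)/(M_ν ‖s(x^k) − x^k‖^{1+ν}))^{1/ν}}. -/
open scoped RealInnerProductSpace

lemma aux_descent {n : ℕ} {S : Set (EuclideanSpace ℝ (Fin n))} (hSconv : Convex ℝ S)
    {h : EuclideanSpace ℝ (Fin n) → ℝ} {h' : EuclideanSpace ℝ (Fin n) → EuclideanSpace ℝ (Fin n)}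
    (hgrad : ∀ x, HasGradientAt h (h' x) x)
    {ν Mν : ℝ} (hν₀ : 0 < ν) (hM : 0 ≤ Mν)
    (hHolder : ∀ x ∈ S, ∀ y ∈ S, ‖h' x - h' y‖ ≤ Mν * ‖x - y‖ ^ ν)
    {x y : EuclideanSpace ℝ (Fin n)} (hx : x ∈ S) (hy : y ∈ S)
    {t : ℝ} (ht0 : 0 ≤ t) (ht1 : t ≤ 1) :
    h (x + t • (y - x)) - h x ≤
      t * ⟪h' x, y - x⟫ + Mν * ‖y - x‖ ^ (1 + ν) / (1 + ν) * t ^ (1 + ν) := by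
  set C : ℝ := Mν * ‖y - x‖ ^ (1 + ν) / (1 + ν) with hC
  set ψ : ℝ → ℝ := fun s => h (x + s • (y - x)) - s * ⟪h' x, y - x⟫ - C * s ^ (1 + ν) with hψdef
  have hν1 : (0:ℝ) < 1 + ν := by linarith
  have hline : ∀ s : ℝ, HasDerivAt (fun s : ℝ => x + s • (y - x)) (y - x) s := by
    intro s
    simpa using (((hasDerivAt_id s).smul_const (y - x)).const_add x)
  have hcomp : ∀ s : ℝ, HasDerivAt (fun s : ℝ => h (x + s • (y - x)))
      ⟪h' (x + s • (y - x)), y - x⟫ s := by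
    intro s
    have hc := ((hgrad (x + s • (y - x))).hasFDerivAt.comp_hasDerivAt s (hline s))
    simp at hc
    exact hc
  have hpow : ∀ s : ℝ, HasDerivAt (fun s : ℝ => s ^ (1 + ν)) ((1 + ν) * s ^ ν) s := by
    intro s
    have := Real.hasDerivAt_rpow_const (x := s) (p := 1 + ν) (Or.inr (by linarith))
    simpa [show (1:ℝ) + ν - 1 = ν by ring] using this
  have hψ : ∀ s : ℝ, HasDerivAt ψ
      (⟪h' (x + s • (y - x)), y - x⟫ - ⟪h' x, y - x⟫ - C * ((1 + ν) * s ^ ν)) s := by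
    intro s
    exact ((hcomp s).sub (hasDerivAt_mul_const _)).sub ((hpow s).const_mul C)
  have hanti : AntitoneOn ψ (Set.Icc 0 t) := by
    apply antitoneOn_of_deriv_nonpos (convex_Icc 0 t)
    · exact fun s _ => ((hψ s).differentiableAt).continuousAt.continuousWithinAt
    · exact fun s _ => ((hψ s).differentiableAt).differentiableWithinAt
    · intro s hs
      rw [interior_Icc] at hs
      rw [(hψ s).deriv]
      set p := x + s • (y - x) with hp
      have hs0 : 0 < s := hs.1
      have hs1 : s ≤ 1 := le_trans hs.2.le ht1
      have hpS : p ∈ S := by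
        have hpe : p = (1 - s) • x + s • y := by rw [hp]; module
        rw [hpe]
        exact hSconv hx hy (by linarith) (by linarith) (by ring)
      have hnorm : ‖p - x‖ = s * ‖y - x‖ := by
        have hpe : p - x = s • (y - x) := by rw [hp]; abel
        rw [hpe, norm_smul, Real.norm_eq_abs, abs_of_pos hs0]
      have hH := hHolder p hpS x hx
      rw [hnorm, Real.mul_rpow hs0.le (norm_nonneg _)] at hH
      have hin : ⟪h' p - h' x, y - x⟫ ≤ Mν * (s ^ ν * ‖y - x‖ ^ ν) * ‖y - x‖ :=
        (real_inner_le_norm _ _).trans (mul_le_mul_of_nonneg_right hH (norm_nonneg _))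
      have hbase : ‖y - x‖ ^ (1 + ν) = ‖y - x‖ * ‖y - x‖ ^ ν := by
        rw [Real.rpow_add' (norm_nonneg _) (by positivity), Real.rpow_one]
      have hCeq : C * (1 + ν) = Mν * ‖y - x‖ ^ (1 + ν) := by
        rw [hC]; field_simp
      have hdiff : ⟪h' p, y - x⟫ - ⟪h' x, y - x⟫ = ⟪h' p - h' x, y - x⟫ :=
        (inner_sub_left _ _ _).symm
      have hCs : C * ((1 + ν) * s ^ ν) = Mν * (s ^ ν * ‖y - x‖ ^ ν) * ‖y - x‖ := by
        calc C * ((1 + ν) * s ^ ν) = (C * (1 + ν)) * s ^ ν := by ring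
          _ = Mν * (‖y - x‖ * ‖y - x‖ ^ ν) * s ^ ν := by rw [hCeq, hbase]
          _ = Mν * (s ^ ν * ‖y - x‖ ^ ν) * ‖y - x‖ := by ring
      linarith [hin, hdiff.le, hdiff.ge]
  have hψle : ψ t ≤ ψ 0 := hanti (Set.left_mem_Icc.2 ht0) (Set.right_mem_Icc.2 ht0) ht0
  have hψ0 : ψ 0 = h x := by
    simp [hψdef, Real.zero_rpow (by positivity : (1:ℝ)+ν ≠ 0)]
  have hψt : ψ t = h (x + t • (y - x)) - t * ⟪h' x, y - x⟫ - C * t ^ (1 + ν) := rfl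
  rw [hψt, hψ0] at hψle
  linarith

theorem stmt9 {n m : ℕ} (hm : 0 < m)
    (S : Set (EuclideanSpace ℝ (Fin n))) (hSconv : Convex ℝ S) (hScomp : IsCompact S)
    (g h : Fin m → EuclideanSpace ℝ (Fin n) → ℝ)
    (h' : Fin m → EuclideanSpace ℝ (Fin n) → EuclideanSpace ℝ (Fin n))
    (hgconv : ∀ i, ConvexOn ℝ S (g i))
    (hgrad : ∀ i x, HasGradientAt (h i) (h' i x) x)
    (ν Mν : ℝ) (hν₀ : 0 < ν) (hν₁ : ν ≤ 1) (hM : 0 < Mν)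
    (hHolder : ∀ i, ∀ x ∈ S, ∀ y ∈ S, ‖h' i x - h' i y‖ ≤ Mν * ‖x - y‖ ^ ν)
    (x : EuclideanSpace ℝ (Fin n)) (hx : x ∈ S)
    (sx : EuclideanSpace ℝ (Fin n)) (hsx : sx ∈ S) (hne : sx ≠ x) (θx : ℝ) (hθneg : θx < 0)
    (hθval : θx = ⨆ i : Fin m, (g i sx - g i x + ⟪h' i x, sx - x⟫))
    (hθopt : ∀ u ∈ S, θx ≤ ⨆ i : Fin m, (g i u - g i x + ⟪h' i x, u - x⟫))
    (t : ℝ) (ht : t = min 1 ((|θx| / (Mν * ‖sx - x‖ ^ (1 + ν))) ^ (1 / ν))) :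
    ∀ i, (g i (x + t • (sx - x)) + h i (x + t • (sx - x))) - (g i x + h i x) ≤
      -(ν / (1 + ν)) * |θx| * min 1 ((-θx / (Mν * ‖sx - x‖ ^ (1 + ν))) ^ (1 / ν)) := by
  intro i
  have hν1 : (0:ℝ) < 1 + ν := by linarith
  have habs : |θx| = -θx := abs_of_neg hθneg
  have hD : 0 < ‖sx - x‖ := norm_sub_pos_iff.mpr hne
  have hA : 0 < Mν * ‖sx - x‖ ^ (1 + ν) := by positivity
  have hratio : 0 < -θx / (Mν * ‖sx - x‖ ^ (1 + ν)) := div_pos (by linarith) hA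
  have ht' : t = min 1 ((-θx / (Mν * ‖sx - x‖ ^ (1 + ν))) ^ (1 / ν)) := by rw [ht, habs]
  have ht0 : 0 < t := by
    rw [ht']
    exact lt_min one_pos (Real.rpow_pos_of_pos hratio _)
  have ht1 : t ≤ 1 := by rw [ht']; exact min_le_left _ _
  have htν : t ^ ν ≤ -θx / (Mν * ‖sx - x‖ ^ (1 + ν)) := by
    have h1 : t ≤ (-θx / (Mν * ‖sx - x‖ ^ (1 + ν))) ^ (1 / ν) := by
      rw [ht']; exact min_le_right _ _
    have h2 := Real.rpow_le_rpow ht0.le h1 hν₀.le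
    rwa [← Real.rpow_mul hratio.le, one_div, inv_mul_cancel₀ hν₀.ne', Real.rpow_one] at h2
  have hkey : Mν * ‖sx - x‖ ^ (1 + ν) * t ^ (1 + ν) ≤ t * (-θx) := by
    have h3 : Mν * ‖sx - x‖ ^ (1 + ν) * t ^ ν ≤ -θx := (le_div_iff₀' hA).mp htν
    have h4 : t ^ (1 + ν) = t * t ^ ν := by
      rw [Real.rpow_add ht0, Real.rpow_one]
    calc Mν * ‖sx - x‖ ^ (1 + ν) * t ^ (1 + ν)
        = t * (Mν * ‖sx - x‖ ^ (1 + ν) * t ^ ν) := by rw [h4]; ring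
      _ ≤ t * (-θx) := mul_le_mul_of_nonneg_left h3 ht0.le
  have hgcomb : g i (x + t • (sx - x)) ≤ g i x + t * (g i sx - g i x) := by
    have hpe : x + t • (sx - x) = (1 - t) • x + t • sx := by module
    have hcv := (hgconv i).2 hx hsx (by linarith : (0:ℝ) ≤ 1 - t) ht0.le (by ring)
    simp only [smul_eq_mul] at hcv
    rw [hpe]; linarith
  have hterm : g i sx - g i x + ⟪h' i x, sx - x⟫ ≤ θx := by
    rw [hθval]
    exact le_ciSup (f := fun j : Fin m => g j sx - g j x + ⟪h' j x, sx - x⟫)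
      (Set.Finite.bddAbove (Set.finite_range _)) i
  have hdesc := aux_descent hSconv (hgrad i) hν₀ hM.le (hHolder i) hx hsx ht0.le ht1
  rw [habs, ← ht']
  have hdiv : Mν * ‖sx - x‖ ^ (1 + ν) / (1 + ν) * t ^ (1 + ν) ≤ t * (-θx) / (1 + ν) := by
    rw [div_mul_eq_mul_div]
    gcongr
  have hmul := mul_le_mul_of_nonneg_left hterm ht0.le
  have hre : -(ν / (1 + ν)) * (-θx) * t = t * θx + t * (-θx) / (1 + ν) := by
    field_simp
    ring
  linarith
end

section
/- Under assumption (A1) (each ∇h_i ν-Hölder with constant ≤ M_ν on dom(G), ν ∈ (0,1]) and with dom(G) of diameter D, the sequence (x^k) generated by the parameter-dependent conditional gradient method satisfies min_{0≤j≤k} |θ(x^j)| ≤ max{ (1+ν)(f₀^max − f^inf)/(ν(k+1)), ((1+ν) M_ν^{1/ν} D^{(1+ν)/ν} (f₀^max − f^inf)/(ν(k+1)))^{ν/(1+ν)} }, where f₀^max = max_i f_i(x⁰) and f^inf = min_i inf_{x ∈ dom(G)} f_i(x). -/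
open scoped RealInnerProductSpace

lemma holder_contOn {n : ℕ} (S : Set (EuclideanSpace ℝ (Fin n)))
    (h' : EuclideanSpace ℝ (Fin n) → EuclideanSpace ℝ (Fin n))
    (ν Mν : ℝ) (hν₀ : 0 < ν) (hM : 0 < Mν)
    (hHolder : ∀ x ∈ S, ∀ y ∈ S, ‖h' x - h' y‖ ≤ Mν * ‖x - y‖ ^ ν) :
    ContinuousOn h' S := by
  rw [Metric.continuousOn_iff]
  intro a ha ε hε
  refine ⟨(ε / Mν) ^ (1 / ν), Real.rpow_pos_of_pos (div_pos hε hM) _, fun b hb hdist => ?_⟩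
  have h1 : dist (h' b) (h' a) ≤ Mν * (dist b a) ^ ν := by
    rw [dist_eq_norm, dist_eq_norm]; exact hHolder b hb a ha
  have h2 : (dist b a) ^ ν < ((ε / Mν) ^ (1 / ν)) ^ ν :=
    Real.rpow_lt_rpow dist_nonneg hdist hν₀
  have h3 : ((ε / Mν) ^ (1 / ν)) ^ ν = ε / Mν := by
    rw [← Real.rpow_mul (div_pos hε hM).le, one_div_mul_cancel hν₀.ne', Real.rpow_one]
  calc dist (h' b) (h' a) ≤ Mν * (dist b a) ^ ν := h1
    _ < Mν * (ε / Mν) := by rw [← h3]; exact (mul_lt_mul_iff_right₀ hM).2 h2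
    _ = ε := by field_simp

lemma descent {n : ℕ} {S : Set (EuclideanSpace ℝ (Fin n))} (hSconv : Convex ℝ S)
    {h : EuclideanSpace ℝ (Fin n) → ℝ} {h' : EuclideanSpace ℝ (Fin n) → EuclideanSpace ℝ (Fin n)}
    (hgrad : ∀ x, HasGradientAt h (h' x) x)
    {ν Mν : ℝ} (hν₀ : 0 < ν)
    (hHolder : ∀ x ∈ S, ∀ y ∈ S, ‖h' x - h' y‖ ≤ Mν * ‖x - y‖ ^ ν)
    (hcont : ContinuousOn h' S)
    {x y : EuclideanSpace ℝ (Fin n)} (hx : x ∈ S) (hy : y ∈ S) :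
    h y ≤ h x + ⟪h' x, y - x⟫ + Mν / (1 + ν) * ‖y - x‖ ^ (1 + ν) := by
  rcases eq_or_ne y x with rfl | hne
  · simp only [sub_self, inner_zero_right, norm_zero]
    rw [Real.zero_rpow (by positivity)]
    simp
  set d := y - x with hd
  have hdpos : (0:ℝ) < ‖d‖ := by
    simpa [hd] using norm_pos_iff.mpr (sub_ne_zero.mpr hne)
  have hline : ∀ t : ℝ, HasDerivAt (fun t : ℝ => x + t • d) d t := by
    intro t
    simpa using ((hasDerivAt_id t).smul_const d).const_add x
  have hmem : ∀ t ∈ Set.Icc (0:ℝ) 1, x + t • d ∈ S := by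
    intro t ht
    have : x + t • (y - x) ∈ S := hSconv.add_smul_sub_mem hx hy ht
    simpa [hd] using this
  have hψ : ∀ t : ℝ, HasDerivAt (fun t : ℝ => h (x + t • d)) ⟪h' (x + t • d), d⟫ t := by
    intro t
    have := ((hgrad (x + t • d)).hasFDerivAt.comp_hasDerivAt t (hline t))
    simp at this; exact this
  have hcont1 : ContinuousOn (fun t : ℝ => ⟪h' (x + t • d), d⟫) (Set.Icc (0:ℝ) 1) := by
    apply ContinuousOn.inner _ continuousOn_const
    exact hcont.comp ((continuous_const.add (continuous_id.smul continuous_const)).continuousOn) hmem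
  have hint1 : IntervalIntegrable (fun t : ℝ => ⟪h' (x + t • d), d⟫) MeasureTheory.volume 0 1 := by
    apply ContinuousOn.intervalIntegrable
    rwa [Set.uIcc_of_le zero_le_one]
  have hftc : ∫ t in (0:ℝ)..1, ⟪h' (x + t • d), d⟫ = h (x + (1:ℝ) • d) - h (x + (0:ℝ) • d) :=
    intervalIntegral.integral_eq_sub_of_hasDerivAt (fun t _ => hψ t) hint1
  have hx0 : x + (0:ℝ) • d = x := by simp
  have hy1 : x + (1:ℝ) • d = y := by simp [hd]
  rw [hx0, hy1] at hftc
  have hmono : ∀ t ∈ Set.Icc (0:ℝ) 1,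
      ⟪h' (x + t • d), d⟫ ≤ ⟪h' x, d⟫ + Mν * ‖d‖ ^ (1 + ν) * t ^ ν := by
    intro t ht
    have key : ⟪h' (x + t • d) - h' x, d⟫ ≤ Mν * ‖d‖ ^ (1 + ν) * t ^ ν := by
      calc ⟪h' (x + t • d) - h' x, d⟫ ≤ ‖h' (x + t • d) - h' x‖ * ‖d‖ := real_inner_le_norm _ _
        _ ≤ (Mν * ‖(x + t • d) - x‖ ^ ν) * ‖d‖ := by
            apply mul_le_mul_of_nonneg_right _ (norm_nonneg _)
            exact hHolder _ (hmem t ht) x hx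
        _ = Mν * ‖d‖ ^ (1 + ν) * t ^ ν := by
            have h1 : ‖(x + t • d) - x‖ = t * ‖d‖ := by
              simp [norm_smul, abs_of_nonneg ht.1]
            rw [h1, Real.mul_rpow ht.1 (norm_nonneg d), Real.rpow_add hdpos, Real.rpow_one]
            ring
    rw [inner_sub_left] at key
    linarith
  have hle : ∫ t in (0:ℝ)..1, ⟪h' (x + t • d), d⟫
      ≤ ∫ t in (0:ℝ)..1, (⟪h' x, d⟫ + Mν * ‖d‖ ^ (1 + ν) * t ^ ν) :=
    intervalIntegral.integral_mono_on zero_le_one hint1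
      (IntervalIntegrable.add intervalIntegrable_const
        ((intervalIntegral.intervalIntegrable_rpow (by left; linarith)).const_mul _)) hmono
  have hval : ∫ t in (0:ℝ)..1, (⟪h' x, d⟫ + Mν * ‖d‖ ^ (1 + ν) * t ^ ν)
      = ⟪h' x, d⟫ + Mν * ‖d‖ ^ (1 + ν) / (1 + ν) := by
    rw [intervalIntegral.integral_add intervalIntegrable_const
        ((intervalIntegral.intervalIntegrable_rpow (by left; linarith)).const_mul _),
      intervalIntegral.integral_const, intervalIntegral.integral_const_mul,
      integral_rpow (by left; linarith)]
    rw [Real.one_rpow, Real.zero_rpow (by positivity)]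
    field_simp
    ring
  rw [hval, hftc] at hle
  have : Mν / (1 + ν) * ‖d‖ ^ (1 + ν) = Mν * ‖d‖ ^ (1 + ν) / (1 + ν) := by ring
  rw [hd] at *
  linarith [hle]

lemma scalar_step (ν Mν Δ dn D : ℝ) (hν₀ : 0 < ν) (hM : 0 < Mν) (hΔ : 0 ≤ Δ)
    (hdn : 0 ≤ dn) (hdD : dn ≤ D) (hDpos : 0 < D)
    (hzero : Δ ≠ 0 → 0 < dn) :
    (min 1 ((Δ / (Mν * dn ^ (1 + ν))) ^ (1 / ν))) * (-Δ)
      + Mν / (1 + ν) * ((min 1 ((Δ / (Mν * dn ^ (1 + ν))) ^ (1 / ν))) ^ (1 + ν) * dn ^ (1 + ν))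
    ≤ -(ν / (1 + ν)) * min Δ (Δ ^ ((1 + ν) / ν) / (Mν ^ (1 / ν) * D ^ ((1 + ν) / ν))) := by
  have h1ν : (0:ℝ) < 1 + ν := by linarith
  have hcneg : -(ν / (1 + ν)) ≤ 0 := by
    have : 0 ≤ ν / (1 + ν) := by positivity
    linarith
  rcases eq_or_lt_of_le hΔ with heq | hΔpos
  · rw [← heq]
    rw [zero_div, Real.zero_rpow (by positivity : (1:ℝ)/ν ≠ 0), min_eq_right zero_le_one]
    rw [Real.zero_rpow (by positivity : (1:ℝ)+ν ≠ 0),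
      Real.zero_rpow (by positivity : ((1:ℝ)+ν)/ν ≠ 0)]
    simp
  · have hdnpos : 0 < dn := hzero hΔpos.ne'
    have hC : 0 < Mν * dn ^ (1 + ν) := by positivity
    set C := Mν * dn ^ (1 + ν) with hCdef
    set r := (Δ / C) ^ (1 / ν) with hrdef
    have hrpos : 0 < r := Real.rpow_pos_of_pos (div_pos hΔpos hC) _
    have hrν : r ^ ν = Δ / C := by
      rw [hrdef, ← Real.rpow_mul (div_pos hΔpos hC).le, one_div_mul_cancel hν₀.ne',
        Real.rpow_one]
    have hKpos : 0 < Mν ^ (1 / ν) * D ^ ((1 + ν) / ν) := by positivity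
    have hCν : C ^ (1 / ν) = Mν ^ (1 / ν) * dn ^ ((1 + ν) / ν) := by
      rw [hCdef, Real.mul_rpow hM.le (by positivity), ← Real.rpow_mul hdn, mul_one_div]
    have hCνpos : 0 < C ^ (1 / ν) := Real.rpow_pos_of_pos hC _
    have hCνle : C ^ (1 / ν) ≤ Mν ^ (1 / ν) * D ^ ((1 + ν) / ν) := by
      rw [hCν]
      have : dn ^ ((1 + ν) / ν) ≤ D ^ ((1 + ν) / ν) :=
        Real.rpow_le_rpow hdn hdD (by positivity)
      nlinarith [Real.rpow_pos_of_pos hM (1/ν)]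
    rcases le_total 1 r with h1r | hr1
    · rw [min_eq_left h1r]
      have hCΔ : C ≤ Δ := by
        have h1 : (1:ℝ) ≤ r ^ ν := by
          calc (1:ℝ) = 1 ^ ν := (Real.one_rpow ν).symm
          _ ≤ r ^ ν := Real.rpow_le_rpow zero_le_one h1r hν₀.le
        rw [hrν] at h1
        exact (one_le_div hC).mp h1
      rw [Real.one_rpow, one_mul, one_mul]
      have e : -Δ + Δ / (1 + ν) = -(ν / (1 + ν)) * Δ := by field_simp; ring
      have hdiv : C / (1 + ν) ≤ Δ / (1 + ν) := by gcongr
      have hfin : -(ν / (1 + ν)) * Δ ≤ -(ν / (1 + ν)) *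
          min Δ (Δ ^ ((1 + ν) / ν) / (Mν ^ (1 / ν) * D ^ ((1 + ν) / ν))) :=
        mul_le_mul_of_nonpos_left (min_le_left _ _) hcneg
      have : Mν / (1 + ν) * dn ^ (1 + ν) = C / (1 + ν) := by rw [hCdef]; ring
      linarith
    · rw [min_eq_right hr1]
      have hr1ν : r ^ (1 + ν) = r * (Δ / C) := by
        rw [Real.rpow_add hrpos, Real.rpow_one, hrν]
      have e1 : r * (-Δ) + Mν / (1 + ν) * (r ^ (1 + ν) * dn ^ (1 + ν))
          = -(ν / (1 + ν)) * (r * Δ) := by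
        rw [hr1ν, hCdef]
        field_simp
        ring
      rw [e1]
      have hrΔ : r * Δ = Δ ^ ((1 + ν) / ν) / C ^ (1 / ν) := by
        rw [hrdef, Real.div_rpow hΔ hC.le]
        rw [show (1 + ν) / ν = 1 / ν + 1 by field_simp]
        rw [Real.rpow_add_one hΔpos.ne']
        ring
      have hge : Δ ^ ((1 + ν) / ν) / (Mν ^ (1 / ν) * D ^ ((1 + ν) / ν)) ≤ r * Δ := by
        rw [hrΔ]
        gcongr
      have : min Δ (Δ ^ ((1 + ν) / ν) / (Mν ^ (1 / ν) * D ^ ((1 + ν) / ν))) ≤ r * Δ :=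
        le_trans (min_le_right _ _) hge
      exact mul_le_mul_of_nonpos_left this hcneg

theorem stmt12 {n m : ℕ} (hm : 0 < m)
    (S : Set (EuclideanSpace ℝ (Fin n))) (hSconv : Convex ℝ S) (hScomp : IsCompact S)
    (g h : Fin m → EuclideanSpace ℝ (Fin n) → ℝ)
    (h' : Fin m → EuclideanSpace ℝ (Fin n) → EuclideanSpace ℝ (Fin n))
    (hgconv : ∀ i, ConvexOn ℝ S (g i))
    (hglsc : ∀ i, LowerSemicontinuousOn (g i) S)
    (hgrad : ∀ i x, HasGradientAt (h i) (h' i x) x)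
    (ν Mν : ℝ) (hν₀ : 0 < ν) (hν₁ : ν ≤ 1) (hM : 0 < Mν)
    (hHolder : ∀ i, ∀ x ∈ S, ∀ y ∈ S, ‖h' i x - h' i y‖ ≤ Mν * ‖x - y‖ ^ ν)
    (D : ℝ) (hD : ∀ x ∈ S, ∀ y ∈ S, ‖x - y‖ ≤ D)
    (x s : ℕ → EuclideanSpace ℝ (Fin n)) (θ : ℕ → ℝ)
    (hxS : ∀ k, x k ∈ S) (hsS : ∀ k, s k ∈ S)
    (hθval : ∀ k, θ k = ⨆ i : Fin m, (g i (s k) - g i (x k) + ⟪h' i (x k), s k - x k⟫))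
    (hθopt : ∀ k, ∀ u ∈ S, θ k ≤ ⨆ i : Fin m, (g i u - g i (x k) + ⟪h' i (x k), u - x k⟫))
    (hstep : ∀ k, x (k + 1) =
      x k + (min 1 ((|θ k| / (Mν * ‖s k - x k‖ ^ (1 + ν))) ^ (1 / ν))) • (s k - x k))
    (f0max finf : ℝ)
    (hf0 : f0max = ⨆ i : Fin m, (g i (x 0) + h i (x 0)))
    (hfinf : ∀ i, ∀ u ∈ S, finf ≤ g i u + h i u) :
    ∀ k : ℕ,
      (Finset.range (k + 1)).inf' (Finset.nonempty_range_iff.mpr (Nat.succ_ne_zero k))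
          (fun j => |θ j|)
        ≤ max ((1 + ν) * (f0max - finf) / (ν * (k + 1)))
            (((1 + ν) * Mν ^ (1 / ν) * D ^ ((1 + ν) / ν) * (f0max - finf) / (ν * (k + 1)))
              ^ (ν / (1 + ν))) := by
  have h1ν : (0:ℝ) < 1 + ν := by linarith
  have ne : Nonempty (Fin m) := ⟨⟨0, hm⟩⟩
  have bdd : ∀ f : Fin m → ℝ, BddAbove (Set.range f) := fun f => (Set.finite_range f).bddAbove
  set F : ℕ → ℝ := fun k => ⨆ i : Fin m, (g i (x k) + h i (x k)) with hF
  have hFdef : ∀ k, F k = ⨆ i : Fin m, (g i (x k) + h i (x k)) := fun k => rfl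
  have hf0F : F 0 = f0max := by rw [hFdef]; exact hf0.symm
  have hFinf : ∀ k, finf ≤ F k := by
    intro k
    rw [hFdef]
    exact le_trans (hfinf ⟨0, hm⟩ (x k) (hxS k))
      (le_ciSup (f := fun i : Fin m => g i (x k) + h i (x k)) (bdd _) ⟨0, hm⟩)
  have hgap : 0 ≤ f0max - finf := by
    have := hFinf 0
    rw [hf0F] at this
    linarith
  have hθzero : ∀ k, s k = x k → θ k = 0 := by
    intro k hsx
    rw [hθval k, hsx]
    have : ∀ i : Fin m, g i (x k) - g i (x k) + ⟪h' i (x k), x k - x k⟫ = 0 := by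
      intro i; simp [sub_self]
    simp only [this, ciSup_const]
  have hθnonpos : ∀ k, θ k ≤ 0 := by
    intro k
    refine le_trans (hθopt k (x k) (hxS k)) (ciSup_le fun i => le_of_eq ?_)
    simp [sub_self]
  have hDnn : 0 ≤ D := le_trans (norm_nonneg _) (hD (x 0) (hxS 0) (x 0) (hxS 0))
  intro k
  have hB1nn : 0 ≤ (1 + ν) * (f0max - finf) / (ν * ((k:ℝ) + 1)) := by
    apply div_nonneg (mul_nonneg (by linarith) hgap)
    positivity
  rcases eq_or_lt_of_le hDnn with hD0 | hDpos
  · -- D = 0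
    have hsx : s 0 = x 0 := by
      have h1 : ‖s 0 - x 0‖ ≤ 0 := by rw [hD0]; exact hD (s 0) (hsS 0) (x 0) (hxS 0)
      have := norm_nonneg (s 0 - x 0)
      have : ‖s 0 - x 0‖ = 0 := le_antisymm h1 this
      rwa [norm_eq_zero, sub_eq_zero] at this
    have hθ0 : |θ 0| = 0 := by rw [hθzero 0 hsx]; simp
    calc (Finset.range (k + 1)).inf' _ (fun j => |θ j|) ≤ |θ 0| :=
          Finset.inf'_le _ (Finset.mem_range.mpr (Nat.succ_pos k))
      _ = 0 := hθ0
      _ ≤ (1 + ν) * (f0max - finf) / (ν * ((k:ℝ) + 1)) := hB1nn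
      _ ≤ _ := le_max_left _ _
  -- main case D > 0
  set K := Mν ^ (1 / ν) * D ^ ((1 + ν) / ν) with hK
  have hKpos : 0 < K := by rw [hK]; positivity
  set mf : ℕ → ℝ := fun j => min (|θ j|) (|θ j| ^ ((1 + ν) / ν) / K) with hmf
  have hmfnn : ∀ j, 0 ≤ mf j := by
    intro j
    apply le_min (abs_nonneg _)
    positivity
  have step : ∀ j, F (j + 1) ≤ F j - ν / (1 + ν) * mf j := by
    intro j
    set t := min 1 ((|θ j| / (Mν * ‖s j - x j‖ ^ (1 + ν))) ^ (1 / ν)) with ht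
    have ht0 : 0 ≤ t :=
      le_min zero_le_one (Real.rpow_nonneg (by positivity) _)
    have ht1 : t ≤ 1 := min_le_left _ _
    have hx1 : x (j + 1) = x j + t • (s j - x j) := hstep j
    have hcomb : x j + t • (s j - x j) = (1 - t) • x j + t • s j := by module
    have hdiff : x (j + 1) - x j = t • (s j - x j) := by rw [hx1]; abel
    have hnorm : ‖x (j + 1) - x j‖ ^ (1 + ν) = t ^ (1 + ν) * ‖s j - x j‖ ^ (1 + ν) := by
      rw [hdiff, norm_smul, Real.norm_eq_abs, abs_of_nonneg ht0,
        Real.mul_rpow ht0 (norm_nonneg _)]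
    have hi : ∀ i : Fin m, g i (x (j + 1)) + h i (x (j + 1))
        ≤ F j + t * θ j + Mν / (1 + ν) * (t ^ (1 + ν) * ‖s j - x j‖ ^ (1 + ν)) := by
      intro i
      have hg : g i (x (j + 1)) ≤ (1 - t) * g i (x j) + t * g i (s j) := by
        rw [hx1, hcomb]
        exact (hgconv i).2 (hxS j) (hsS j) (by linarith) ht0 (by ring)
      have hh : h i (x (j + 1)) ≤ h i (x j) + ⟪h' i (x j), x (j + 1) - x j⟫
          + Mν / (1 + ν) * ‖x (j + 1) - x j‖ ^ (1 + ν) :=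
        descent hSconv (hgrad i) hν₀ (hHolder i)
          (holder_contOn S (h' i) ν Mν hν₀ hM (hHolder i)) (hxS j) (hxS (j + 1))
      rw [hnorm, hdiff, real_inner_smul_right] at hh
      have h1 : g i (x j) + h i (x j) ≤ F j := by
        rw [hFdef]; exact le_ciSup (f := fun i : Fin m => g i (x j) + h i (x j)) (bdd _) i
      have h2 : g i (s j) - g i (x j) + ⟪h' i (x j), s j - x j⟫ ≤ θ j := by
        rw [hθval j]
        exact le_ciSup (f := fun i : Fin m => g i (s j) - g i (x j) + ⟪h' i (x j), s j - x j⟫) (bdd _) i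
      have h3 : t * (g i (s j) - g i (x j) + ⟪h' i (x j), s j - x j⟫) ≤ t * θ j :=
        mul_le_mul_of_nonneg_left h2 ht0
      nlinarith
    have hF1 : F (j + 1) ≤ F j + t * θ j
        + Mν / (1 + ν) * (t ^ (1 + ν) * ‖s j - x j‖ ^ (1 + ν)) := by
      rw [hFdef]; exact ciSup_le hi
    have hzero : |θ j| ≠ 0 → 0 < ‖s j - x j‖ := by
      intro hne2
      rcases eq_or_lt_of_le (norm_nonneg (s j - x j)) with h0 | h0
      · exfalso
        apply hne2
        have : s j = x j := by
          rw [← sub_eq_zero, ← norm_eq_zero]; exact h0.symm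
        rw [hθzero j this]; simp
      · exact h0
    have hsc := scalar_step ν Mν (|θ j|) ‖s j - x j‖ D hν₀ hM (abs_nonneg _)
      (norm_nonneg _) (hD (s j) (hsS j) (x j) (hxS j)) hDpos hzero
    have hθeq : θ j = -|θ j| := by rw [abs_of_nonpos (hθnonpos j)]; ring
    rw [← ht] at hsc
    rw [hθeq] at hF1
    have : -(ν / (1 + ν)) * mf j = -(ν / (1 + ν)) *
        min (|θ j|) (|θ j| ^ ((1 + ν) / ν) / K) := rfl
    rw [hmf]
    simp only [hK] at hsc ⊢
    linarith
  have tele : ∀ j : ℕ, F (j + 1) ≤ F 0 - ν / (1 + ν) * ∑ i ∈ Finset.range (j + 1), mf i := by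
    intro j
    induction j with
    | zero => simpa [Finset.sum_range_one] using step 0
    | succ j ih =>
      have := step (j + 1)
      rw [Finset.sum_range_succ]
      have hge : 0 ≤ mf (j + 1) := hmfnn (j + 1)
      linarith
  -- pick the minimizer
  have hne' : (Finset.range (k + 1)).Nonempty := Finset.nonempty_range_iff.mpr (Nat.succ_ne_zero k)
  obtain ⟨j0, hj0mem, hj0⟩ := Finset.exists_mem_eq_inf' hne' mf
  have hsum_ge : ((k : ℝ) + 1) * mf j0 ≤ ∑ i ∈ Finset.range (k + 1), mf i := by
    have := Finset.card_nsmul_le_sum (Finset.range (k + 1)) mf (mf j0)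
      (fun i hi => hj0 ▸ Finset.inf'_le _ hi)
    rw [Finset.card_range, nsmul_eq_mul] at this
    push_cast at this
    linarith
  have hkey : ν / (1 + ν) * (((k : ℝ) + 1) * mf j0) ≤ f0max - finf := by
    have h1 := tele k
    have h2 := hFinf (k + 1)
    rw [hf0F] at h1
    have h3 : ν / (1 + ν) * (((k : ℝ) + 1) * mf j0)
        ≤ ν / (1 + ν) * ∑ i ∈ Finset.range (k + 1), mf i := by
      apply mul_le_mul_of_nonneg_left hsum_ge (by positivity)
    linarith
  have hB : mf j0 ≤ (1 + ν) * (f0max - finf) / (ν * ((k:ℝ) + 1)) := by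
    rw [le_div_iff₀ (by positivity : (0:ℝ) < ν * ((k:ℝ) + 1))]
    have hν1pos : (0:ℝ) < 1 + ν := h1ν
    have := mul_le_mul_of_nonneg_left hkey (le_of_lt hν1pos)
    have hexp : (1 + ν) * (ν / (1 + ν) * (((k : ℝ) + 1) * mf j0))
        = mf j0 * (ν * ((k:ℝ) + 1)) := by field_simp
    nlinarith
  have hinf_le : (Finset.range (k + 1)).inf' hne' (fun j => |θ j|) ≤ |θ j0| :=
    Finset.inf'_le _ hj0mem
  rcases le_total (|θ j0|) (|θ j0| ^ ((1 + ν) / ν) / K) with hcase | hcase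
  · have : mf j0 = |θ j0| := min_eq_left hcase
    rw [this] at hB
    exact le_trans hinf_le (le_trans hB (le_max_left _ _))
  · have hmeq : mf j0 = |θ j0| ^ ((1 + ν) / ν) / K := min_eq_right hcase
    rw [hmeq] at hB
    have hp : |θ j0| ^ ((1 + ν) / ν)
        ≤ (1 + ν) * (f0max - finf) / (ν * ((k:ℝ) + 1)) * K := by
      rw [div_le_iff₀ hKpos] at hB
      exact hB
    have hid : |θ j0| = (|θ j0| ^ ((1 + ν) / ν)) ^ (ν / (1 + ν)) := by
      rw [← Real.rpow_mul (abs_nonneg _)]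
      rw [show (1 + ν) / ν * (ν / (1 + ν)) = 1 by field_simp]
      rw [Real.rpow_one]
    have hfin : |θ j0| ≤ ((1 + ν) * (f0max - finf) / (ν * ((k:ℝ) + 1)) * K) ^ (ν / (1 + ν)) := by
      rw [hid]
      exact Real.rpow_le_rpow (Real.rpow_nonneg (abs_nonneg _) _) hp (by positivity)
    have heq2 : (1 + ν) * (f0max - finf) / (ν * ((k:ℝ) + 1)) * K
        = (1 + ν) * Mν ^ (1 / ν) * D ^ ((1 + ν) / ν) * (f0max - finf) / (ν * ((k:ℝ) + 1)) := by
      rw [hK]; ring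
    rw [heq2] at hfin
    exact le_trans hinf_le (le_trans hfin (le_max_right _ _))
end

section
/- Assume H = (h_1,…,h_m) is convex and differentiable, each g_i convex, and x* ∈ dom(G) satisfies F(x*) ≤ F(x^k) componentwise. Then 0 ≤ min_i (f_i(x^k) − f_i(x*)) ≤ |θ(x^k)|, where θ(x^k) = min_u max_i {g_i(u) − g_i(x^k) + ⟨∇h_i(x^k), u − x^k⟩} ≤ 0. -/
open scoped RealInnerProductSpace

private lemma grad_ineq {n : ℕ} {S : Set (EuclideanSpace ℝ (Fin n))}
    {h : EuclideanSpace ℝ (Fin n) → ℝ} {G xs xk : EuclideanSpace ℝ (Fin n)}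
    (hconv : ConvexOn ℝ S h) (hgrad : HasGradientAt h G xk)
    (hxs : xs ∈ S) (hxk : xk ∈ S) :
    ⟪G, xs - xk⟫ ≤ h xs - h xk := by
  set φ : ℝ → ℝ := fun t => h (xk + t • (xs - xk)) with hφ
  have hL : ∀ t : ℝ, HasDerivAt (fun t : ℝ => xk + t • (xs - xk)) (xs - xk) t := by
    intro t
    simpa using ((hasDerivAt_id t).smul_const (xs - xk)).const_add xk
  have hd : HasDerivAt φ ⟪G, xs - xk⟫ 0 := by
    have hF := hasGradientAt_iff_hasFDerivAt.mp hgrad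
    have hF0 : HasFDerivAt h ((InnerProductSpace.toDual ℝ _) G)
        ((fun t : ℝ => xk + t • (xs - xk)) 0) := by simpa using hF
    have := hF0.comp_hasDerivAt 0 (hL 0)
    simpa only [Function.comp_def, InnerProductSpace.toDual_apply_apply, hφ] using this
  have hslope : Filter.Tendsto (slope φ 0) (nhdsWithin 0 {(0:ℝ)}ᶜ)
      (nhds ⟪G, xs - xk⟫) := hasDerivAt_iff_tendsto_slope.mp hd
  have hslope' : Filter.Tendsto (slope φ 0) (nhdsWithin 0 (Set.Ioi 0))
      (nhds ⟪G, xs - xk⟫) :=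
    hslope.mono_left (nhdsWithin_mono _ (fun t ht (h0 : t = 0) => by simp [h0] at ht))
  refine le_of_tendsto hslope' ?_
  filter_upwards [Ioo_mem_nhdsGT_of_mem (Set.left_mem_Ico.mpr one_pos)] with t (ht : t ∈ Set.Ioo (0:ℝ) 1)
  have ht0 : 0 < t := ht.1
  have ht1 : t ≤ 1 := le_of_lt ht.2
  have hmem : φ t ≤ (1 - t) * h xk + t * h xs := by
    have := hconv.2 hxk hxs (by linarith : (0:ℝ) ≤ 1 - t) (le_of_lt ht0) (by ring)
    have heq : (1 - t) • xk + t • xs = xk + t • (xs - xk) := by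
      rw [smul_sub]; module
    simpa [hφ, heq, smul_eq_mul] using this
  have hφ0 : φ 0 = h xk := by simp [hφ]
  rw [slope_def_field, div_le_iff₀ (by simpa using ht0), hφ0]
  nlinarith [hmem]

theorem stmt13 {n m : ℕ} (hm : 0 < m)
    (S : Set (EuclideanSpace ℝ (Fin n))) (hSconv : Convex ℝ S)
    (g h : Fin m → EuclideanSpace ℝ (Fin n) → ℝ)
    (h' : Fin m → EuclideanSpace ℝ (Fin n) → EuclideanSpace ℝ (Fin n))
    (hgconv : ∀ i, ConvexOn ℝ S (g i))
    (hhconv : ∀ i, ConvexOn ℝ S (h i))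
    (hgrad : ∀ i x, HasGradientAt (h i) (h' i x) x)
    (xs xk : EuclideanSpace ℝ (Fin n)) (hxs : xs ∈ S) (hxk : xk ∈ S)
    (hdom : ∀ i, g i xs + h i xs ≤ g i xk + h i xk)
    (sxk : EuclideanSpace ℝ (Fin n)) (hsxk : sxk ∈ S) (θ : ℝ)
    (hθval : θ = ⨆ i : Fin m, (g i sxk - g i xk + ⟪h' i xk, sxk - xk⟫))
    (hθopt : ∀ u ∈ S, θ ≤ ⨆ i : Fin m, (g i u - g i xk + ⟪h' i xk, u - xk⟫))
    (hθle : θ ≤ 0) :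
    0 ≤ Finset.univ.inf' (Finset.univ_nonempty_iff.mpr ⟨⟨0, hm⟩⟩)
          (fun i => (g i xk + h i xk) - (g i xs + h i xs)) ∧
      Finset.univ.inf' (Finset.univ_nonempty_iff.mpr ⟨⟨0, hm⟩⟩)
          (fun i => (g i xk + h i xk) - (g i xs + h i xs)) ≤ |θ| := by
  haveI : Nonempty (Fin m) := ⟨⟨0, hm⟩⟩
  set M := Finset.univ.inf' (Finset.univ_nonempty_iff.mpr ⟨⟨0, hm⟩⟩ : (Finset.univ : Finset (Fin m)).Nonempty) (fun i => (g i xk + h i xk) - (g i xs + h i xs)) with hM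
  constructor
  · rw [hM, Finset.le_inf'_iff]
    intro i _
    have := hdom i; linarith
  · have hθxs := hθopt xs hxs
    have hsup : (⨆ i : Fin m, (g i xs - g i xk + ⟪h' i xk, xs - xk⟫)) ≤ -M := by
      apply ciSup_le
      intro i
      have h1 : ⟪h' i xk, xs - xk⟫ ≤ h i xs - h i xk :=
        grad_ineq (hhconv i) (hgrad i xk) hxs hxk
      have h2 : M ≤ (g i xk + h i xk) - (g i xs + h i xs) :=
        Finset.inf'_le _ (Finset.mem_univ i)
      linarith
    have : θ ≤ -M := le_trans hθxs hsup
    rw [abs_of_nonpos hθle]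
    linarith
end

section
/- Let (L_k) be the sequence of accepted constants in a doubling line search: L_k = 2^{ℓ_k − 1} L_{k−1} where ℓ_k ≥ 0 is the smallest index such that 2^{ℓ−1} L_{k−1} ≥ L̃_k for thresholds L̃_k > 0 (acceptance guaranteed once L_k^ℓ ≥ L̃_k). Then L_k ≤ 2 max_{0≤j≤k} L̃_j for all k ≥ (log₂(L_{−1}/L̃_0))₊. -/
/-- `L 0` plays the role of `L₋₁` and `L (k+1)` is the constant accepted at iteration `k`
of the doubling line search; `ℓ k` is the accepted inner index and `Lt k` the threshold. -/
theorem stmt17 (L Lt : ℕ → ℝ) (ℓ : ℕ → ℕ)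
    (hL0 : 0 < L 0) (hLt : ∀ k, 0 < Lt k)
    (hacc : ∀ k, L (k + 1) = 2 ^ ((ℓ k : ℤ) - 1) * L k)
    (hmin : ∀ k, ∀ j : ℕ, j < ℓ k → (2 : ℝ) ^ ((j : ℤ) - 1) * L k < Lt k) :
    ∀ k : ℕ, (k : ℝ) ≥ max (Real.logb 2 (L 0 / Lt 0)) 0 →
      L (k + 1) ≤ 2 * (Finset.range (k + 1)).sup'
        (Finset.nonempty_range_iff.mpr (Nat.succ_ne_zero k)) Lt := by
  -- notation for the running max
  set M : ℕ → ℝ := fun k => (Finset.range (k + 1)).sup'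
      (Finset.nonempty_range_iff.mpr (Nat.succ_ne_zero k)) Lt with hM
  have hLt0M : ∀ k, Lt 0 ≤ M k := fun k =>
    Finset.le_sup' Lt (Finset.mem_range.mpr (Nat.succ_pos k))
  have hMmono : ∀ k, M k ≤ M (k + 1) := by
    intro k
    apply Finset.sup'_le
    intro j hj
    exact Finset.le_sup' Lt (Finset.mem_range.mpr
      (lt_trans (Finset.mem_range.mp hj) (Nat.lt_succ_self _)))
  -- key step bound
  have hstep : ∀ k, L (k + 1) ≤ max (2 * Lt k) (L k / 2) := by
    intro k
    rcases Nat.eq_zero_or_pos (ℓ k) with h0 | hpos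
    · have : L (k + 1) = L k / 2 := by
        rw [hacc k, h0]
        norm_num
        ring
      rw [this]; exact le_max_right _ _
    · obtain ⟨n, hn⟩ := Nat.exists_eq_succ_of_ne_zero (Nat.pos_iff_ne_zero.mp hpos)
      have hlt := hmin k n (by omega)
      have hEq : L (k + 1) = 2 * ((2:ℝ) ^ ((n : ℤ) - 1) * L k) := by
        rw [hacc k, hn]
        push_cast
        rw [show ((n:ℤ) + 1 - 1) = ((n:ℤ) - 1) + 1 by ring,
          zpow_add₀ (by norm_num : (2:ℝ) ≠ 0)]
        ring
      calc L (k + 1) ≤ 2 * Lt k := by rw [hEq]; linarith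
        _ ≤ max (2 * Lt k) (L k / 2) := le_max_left _ _
  -- induction: L (k+1) ≤ max (2 * M k) (L 0 / 2^(k+1))
  have main : ∀ k, L (k + 1) ≤ max (2 * M k) (L 0 / 2 ^ (k + 1)) := by
    intro k
    induction k with
    | zero =>
      refine (hstep 0).trans ?_
      apply max_le_max
      · have := hLt0M 0; linarith
      · norm_num
    | succ n ih =>
      refine (hstep (n + 1)).trans ?_
      apply max_le
      · refine le_trans ?_ (le_max_left _ _)
        have hle : Lt (n + 1) ≤ M (n + 1) :=
          Finset.le_sup' Lt (Finset.mem_range.mpr (Nat.lt_succ_self _))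
        linarith
      · have h2 : L (n + 1) / 2 ≤ max (2 * M n) (L 0 / 2 ^ (n + 1)) / 2 := by
          linarith [ih]
        refine h2.trans ?_
        rw [← max_div_div_right (by norm_num : (0:ℝ) ≤ 2)]
        apply max_le_max
        · have hm := hMmono n
          have hMpos : (0:ℝ) < M n := lt_of_lt_of_le (hLt 0) (hLt0M n)
          linarith
        · rw [div_div, ← pow_succ]
  -- conclude
  intro k hk
  have hk' : Real.logb 2 (L 0 / Lt 0) ≤ (k : ℝ) := le_trans (le_max_left _ _) hk
  have hdivpos : 0 < L 0 / Lt 0 := div_pos hL0 (hLt 0)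
  have hpow : L 0 / Lt 0 ≤ (2:ℝ) ^ k := by
    have h1 : L 0 / Lt 0 = (2:ℝ) ^ Real.logb 2 (L 0 / Lt 0) :=
      (Real.rpow_logb (by norm_num) (by norm_num) hdivpos).symm
    have h2 : (2:ℝ) ^ Real.logb 2 (L 0 / Lt 0) ≤ (2:ℝ) ^ (k:ℝ) :=
      Real.rpow_le_rpow_left_iff (by norm_num : (1:ℝ) < 2) |>.mpr hk'
    rw [Real.rpow_natCast] at h2
    linarith [h1 ▸ h2]
  -- so L 0 / 2^(k+1) ≤ 2 * Lt 0 ≤ 2 * M k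
  have hfin : L 0 / 2 ^ (k + 1) ≤ 2 * M k := by
    have hL0le : L 0 ≤ 2 ^ k * Lt 0 := by
      rw [div_le_iff₀ (hLt 0)] at hpow; linarith
    have h2k : (0:ℝ) < 2 ^ k := by positivity
    have : L 0 / 2 ^ (k + 1) ≤ Lt 0 / 2 := by
      rw [div_le_div_iff₀ (by positivity) (by norm_num), pow_succ]
      nlinarith
    have := hLt0M k
    have := hLt 0
    linarith
  refine (main k).trans (max_le le_rfl hfin)
end
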